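/- Let m ≥ 2 and let k = (k_0, k_1, ...) be positive integers with m coprime to (k_0-1)! and to k_j! for every j ≥ 1. Then for every i ≥ 0, the following identity holds in (ZMod m)⟦q⟧: (∑_{ℓ_0=0}^{m-1} C(k_0-1+ℓ_0, k_0-1) q^{ℓ_0}) · (∏_{j=1}^{i} ∑_{ℓ_j=0}^{m-1} C(k_j+ℓ_j, k_j) q^{ℓ_j m^j}) · (∏_{j=0}^{i} (1-q^{m^j})^{k_j}) = 1 - q^{m^{i+1}}. Equivalently, ∏_{j=0}^{i} (1-q^{m^j})^{-k_j} = (1-q^{m^{i+1}})^{-1} · (∑_{ℓ_0=0}^{m-1} C(k_0-1+ℓ_0, k_0-1) q^{ℓ_0}) · ∏_{j=1}^{i} (∑_{ℓ_j=0}^{m-1} C(k_j+ℓ_j, k_j) q^{ℓ_j m^j}). -/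

import Mathlib

open PowerSeries Finset

lemma choose_congr_mod (m r a : ℕ) (hm : Nat.Coprime m (Nat.factorial r)) (ha : r ≤ a) :
    (((a + m).choose r : ℕ) : ZMod m) = ((a.choose r : ℕ) : ZMod m) := by
  have hu : IsUnit ((Nat.factorial r : ℕ) : ZMod m) :=
    (ZMod.isUnit_iff_coprime _ _).mpr hm.symm
  refine hu.mul_left_cancel ?_
  have h1 := Nat.descFactorial_eq_factorial_mul_choose (a + m) r
  have h2 := Nat.descFactorial_eq_factorial_mul_choose a r
  rw [← Nat.cast_mul, ← Nat.cast_mul, ← h1, ← h2,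
    Nat.descFactorial_eq_prod_range, Nat.descFactorial_eq_prod_range,
    Nat.cast_prod, Nat.cast_prod]
  refine Finset.prod_congr rfl fun i hi => ?_
  have hi' : i ≤ a := le_trans (le_of_lt (mem_range.mp hi)) ha
  have : a + m - i = (a - i) + m := by omega
  rw [this, Nat.cast_add, ZMod.natCast_self, add_zero]

lemma core_series (m r : ℕ) (hr : Nat.Coprime m (Nat.factorial r)) :
    (∑ ℓ ∈ range m, (PowerSeries.C (R := ZMod m)) (((r + ℓ).choose r : ℕ) : ZMod m) * X ^ ℓ)
      * (1 - X) ^ (r + 1) = 1 - X ^ m := by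
  have key : (∑ ℓ ∈ range m, (PowerSeries.C (R := ZMod m)) (((r + ℓ).choose r : ℕ) : ZMod m) * X ^ ℓ)
      = (1 - X ^ m) * (mk fun n => ((r + n).choose r : ℕ) : (ZMod m)⟦X⟧) := by
    ext d
    rw [map_sum]
    simp only [coeff_C_mul, coeff_X_pow, mul_ite, mul_one, mul_zero]
    rw [Finset.sum_ite_eq (range m) d, sub_mul, one_mul]
    simp only [map_sub, coeff_mk, coeff_X_pow_mul']
    by_cases hd : d ∈ range m
    · rw [if_pos hd, if_neg (by simp at hd ⊢; omega)]
      simp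
    · rw [if_neg hd]
      have hmd : m ≤ d := by simpa using hd
      rw [if_pos hmd]
      have h3 : r + d = (r + (d - m)) + m := by omega
      rw [h3, choose_congr_mod m r _ hr (by omega), sub_self]
  rw [key, mul_assoc, mk_add_choose_mul_one_sub_pow_eq_one, mul_one]

lemma core_poly (m r : ℕ) (hr : Nat.Coprime m (Nat.factorial r)) :
    (∑ ℓ ∈ range m, (Polynomial.C (((r + ℓ).choose r : ℕ) : ZMod m)) * Polynomial.X ^ ℓ)
      * (1 - Polynomial.X) ^ (r + 1) = 1 - Polynomial.X ^ m := by
  apply Polynomial.coe_inj.mp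
  have hsum : ((∑ ℓ ∈ range m, (Polynomial.C (((r + ℓ).choose r : ℕ) : ZMod m))
      * Polynomial.X ^ ℓ : Polynomial (ZMod m)) : (ZMod m)⟦X⟧)
      = ∑ ℓ ∈ range m, (PowerSeries.C (R := ZMod m)) (((r + ℓ).choose r : ℕ) : ZMod m) * X ^ ℓ := by
    rw [← Polynomial.coeToPowerSeries.ringHom_apply, map_sum]
    simp only [map_mul, map_pow, Polynomial.coeToPowerSeries.ringHom_apply,
      Polynomial.coe_C, Polynomial.coe_X]
  rw [Polynomial.coe_mul, hsum]
  simp only [Polynomial.coe_pow, Polynomial.coe_sub, Polynomial.coe_one, Polynomial.coe_X]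
  exact core_series m r hr

lemma core_gen (m r e : ℕ) (hr : Nat.Coprime m (Nat.factorial r)) :
    (∑ ℓ ∈ range m, (PowerSeries.C (R := ZMod m)) (((r + ℓ).choose r : ℕ) : ZMod m) * X ^ (ℓ * e))
      * (1 - X ^ e) ^ (r + 1) = 1 - X ^ (e * m) := by
  have := congrArg (Polynomial.aeval (X ^ e : (ZMod m)⟦X⟧)) (core_poly m r hr)
  simpa [map_sum, mul_comm, pow_mul, mul_pow, ← pow_mul, PowerSeries.algebraMap_apply] using this

/-- **finite product expansion, equation (2) of the paper.**
Let `m ≥ 2` and `k₀, k₁, …` be positive integers with `m` coprime to `(k₀-1)!` and to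
`k_j!` for `j ≥ 1`.  Then for every `i ≥ 0`, in `(ZMod m)⟦q⟧` we have
`(∑_{ℓ₀=0}^{m-1} C(k₀-1+ℓ₀, k₀-1) q^{ℓ₀}) · (∏_{j=1}^{i} ∑_{ℓ=0}^{m-1} C(k_j+ℓ, k_j) q^{ℓ m^j})
  · (∏_{j=0}^{i} (1-q^{m^j})^{k_j}) = 1 - q^{m^{i+1}}`. -/
theorem finite_product_expansion_mod (m : ℕ) (hm : 2 ≤ m) (k : ℕ → ℕ) (hk : ∀ j, 0 < k j)
    (h0 : Nat.Coprime m (Nat.factorial (k 0 - 1)))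
    (hj : ∀ j, 1 ≤ j → Nat.Coprime m (Nat.factorial (k j))) (i : ℕ) :
    (∑ ℓ ∈ range m, (PowerSeries.C (R := ZMod m)) ((k 0 - 1 + ℓ).choose (k 0 - 1) : ZMod m) * X ^ ℓ)
      * (∏ j ∈ Icc 1 i, ∑ ℓ ∈ range m,
          (PowerSeries.C (R := ZMod m)) ((k j + ℓ).choose (k j) : ZMod m) * X ^ (ℓ * m ^ j))
      * (∏ j ∈ range (i + 1), (1 - X ^ m ^ j) ^ k j)
      = 1 - X ^ m ^ (i + 1) := by
  induction i with
  | zero =>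
      have hk0 : k 0 - 1 + 1 = k 0 := Nat.succ_pred_eq_of_pos (hk 0)
      have := core_gen m (k 0 - 1) 1 h0
      simp only [Finset.Icc_eq_empty (by omega : ¬(1:ℕ) ≤ 0), Finset.prod_empty, mul_one,
        Finset.range_one, Finset.prod_singleton, pow_zero, pow_one, hk0] at this ⊢
      simpa [mul_one, one_mul] using this
  | succ i ih =>
      rw [Finset.prod_Icc_succ_top (by omega : 1 ≤ i + 1), Finset.prod_range_succ]
      have key := core_gen m (k (i + 1)) (m ^ (i + 1)) (hj (i + 1) (by omega))
      have hpow : m ^ (i + 1) * m = m ^ (i + 2) := (pow_succ m (i + 1)).symm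
      calc (∑ ℓ ∈ range m, (PowerSeries.C (R := ZMod m)) ((k 0 - 1 + ℓ).choose (k 0 - 1) : ZMod m) * X ^ ℓ)
            * ((∏ j ∈ Icc 1 i, ∑ ℓ ∈ range m,
                (PowerSeries.C (R := ZMod m)) ((k j + ℓ).choose (k j) : ZMod m) * X ^ (ℓ * m ^ j))
              * (∑ ℓ ∈ range m, (PowerSeries.C (R := ZMod m)) ((k (i+1) + ℓ).choose (k (i+1)) : ZMod m)
                  * X ^ (ℓ * m ^ (i+1))))
            * ((∏ j ∈ range (i + 1), (1 - X ^ m ^ j) ^ k j) * (1 - X ^ m ^ (i+1)) ^ k (i+1))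
          = ((∑ ℓ ∈ range m, (PowerSeries.C (R := ZMod m)) ((k 0 - 1 + ℓ).choose (k 0 - 1) : ZMod m) * X ^ ℓ)
            * (∏ j ∈ Icc 1 i, ∑ ℓ ∈ range m,
                (PowerSeries.C (R := ZMod m)) ((k j + ℓ).choose (k j) : ZMod m) * X ^ (ℓ * m ^ j))
            * (∏ j ∈ range (i + 1), (1 - X ^ m ^ j) ^ k j))
            * ((∑ ℓ ∈ range m, (PowerSeries.C (R := ZMod m)) ((k (i+1) + ℓ).choose (k (i+1)) : ZMod m)
                  * X ^ (ℓ * m ^ (i+1))) * (1 - X ^ m ^ (i+1)) ^ k (i+1)) := by ring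
        _ = (∑ ℓ ∈ range m, (PowerSeries.C (R := ZMod m)) ((k (i+1) + ℓ).choose (k (i+1)) : ZMod m)
                  * X ^ (ℓ * m ^ (i+1))) * (1 - X ^ m ^ (i+1)) ^ (k (i+1) + 1) := by
              rw [ih]; ring
        _ = 1 - X ^ m ^ (i + 2) := by rw [key, hpow]
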